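/- Suppose a graded ℂ-algebra A = ⊕_{d≥0} A_d is generated by homogeneous elements h_1,...,h_s of degrees e_1,...,e_s, where each e_j equals some d_i from a list d_1,...,d_n of positive integers with ∏ d_i = N. Then the Veronese-type subring R = ⊕_{q≥0} A_{qN} is generated as an algebra by A_N. -/

import Mathlib

open Finset

/-- Distribution lemma: any `c` below a finite sum of naturals can be realized as
a pointwise-smaller family summing (over the same set) to `c`. -/
lemma veronese_aux_distr {α : Type*} [DecidableEq α] (F : Finset α) (k : α → ℕ) :
    ∀ c : ℕ, c ≤ ∑ j ∈ F, k j →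
      ∃ k' : α → ℕ, (∀ j, k' j ≤ k j) ∧ ∑ j ∈ F, k' j = c := by
  classical
  induction F using Finset.induction_on with
  | empty =>
    intro c hc
    simp only [Finset.sum_empty, Nat.le_zero] at hc
    exact ⟨fun _ => 0, fun _ => Nat.zero_le _, by simp [hc]⟩
  | insert _ _ ha ih =>
    rename_i a F
    intro c hc
    rw [Finset.sum_insert ha] at hc
    rcases le_total c (k a) with hca | hca
    · refine ⟨Function.update (fun _ => 0) a c, ?_, ?_⟩
      · intro j
        by_cases hj : j = a
        · subst hj; simpa using hca
        · simp [Function.update_of_ne hj]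
      · rw [Finset.sum_insert ha, Function.update_self]
        have : ∑ j ∈ F, Function.update (fun _ => 0) a c j = 0 := by
          apply Finset.sum_eq_zero
          intro j hj
          have : j ≠ a := fun h => ha (h ▸ hj)
          simp [Function.update_of_ne this]
        omega
    · obtain ⟨k'', hk''le, hk''sum⟩ := ih (c - k a) (by omega)
      refine ⟨Function.update k'' a (k a), ?_, ?_⟩
      · intro j
        by_cases hj : j = a
        · subst hj; simp
        · simpa [Function.update_of_ne hj] using hk''le j
      · rw [Finset.sum_insert ha, Function.update_self]
        have : ∑ j ∈ F, Function.update k'' a (k a) j = ∑ j ∈ F, k'' j := by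
          apply Finset.sum_congr rfl
          intro j hj
          have : j ≠ a := fun h => ha (h ▸ hj)
          simp [Function.update_of_ne this]
        omega

/-- Partition lemma: given an extraction principle for degree `N'`, a vector of total degree
`Q * N'` can be partitioned into `Q` parts each of degree `N'`. -/
lemma veronese_aux_partition {n : ℕ} (d : Fin n → ℕ) (hd : ∀ i, 0 < d i) (N' : ℕ)
    (ext : ∀ (m : Fin n → ℕ) (q : ℕ), 1 ≤ q → ∑ i, m i * d i = q * N' →
      ∃ k : Fin n → ℕ, (∀ i, k i ≤ m i) ∧ ∑ i, k i * d i = N') :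
    ∀ (Q : ℕ) (m : Fin n → ℕ), ∑ i, m i * d i = Q * N' →
      ∃ parts : Fin Q → Fin n → ℕ,
        (∀ i, ∑ j, parts j i = m i) ∧ ∀ j, ∑ i, parts j i * d i = N' := by
  intro Q
  induction Q with
  | zero =>
    intro m hm
    simp only [Nat.zero_mul] at hm
    have hm0 : ∀ i, m i = 0 := by
      intro i
      have h1 : m i * d i ≤ ∑ i, m i * d i :=
        Finset.single_le_sum (f := fun i => m i * d i) (fun _ _ => Nat.zero_le _)
          (Finset.mem_univ i)
      have h2 := hd i
      rcases Nat.eq_zero_or_pos (m i) with h | h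
      · exact h
      · exfalso; have : 0 < m i * d i := Nat.mul_pos h h2; omega
    exact ⟨fun j => Fin.elim0 j, fun i => by simp [hm0 i], fun j => Fin.elim0 j⟩
  | succ Q ih =>
    intro m hm
    obtain ⟨k, hk, hksum⟩ := ext m (Q + 1) (by omega) hm
    have hrest : ∑ i, (m i - k i) * d i = Q * N' := by
      have h1 : ∑ i, (k i * d i + (m i - k i) * d i) = ∑ i, m i * d i := by
        apply Finset.sum_congr rfl
        intro i _
        have := hk i
        have : k i + (m i - k i) = m i := by omega
        rw [← add_mul, this]
      rw [Finset.sum_add_distrib, hksum] at h1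
      have h2 : (Q + 1) * N' = Q * N' + N' := by ring
      omega
    obtain ⟨parts', hp1, hp2⟩ := ih (fun i => m i - k i) hrest
    refine ⟨Fin.cons k parts', ?_, ?_⟩
    · intro i
      rw [Fin.sum_univ_succ]
      simp only [Fin.cons_zero, Fin.cons_succ]
      rw [hp1 i]
      have := hk i
      omega
    · intro j
      refine Fin.cases ?_ ?_ j
      · simpa using hksum
      · intro j'; simpa using hp2 j'

/-- The key combinatorial lemma: if `N` is the product of positive values `d i`, and
`∑ m i * d i = q * N` with `q ≥ 1`, then some pointwise-smaller vector has degree exactly `N`. -/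
lemma veronese_aux_key :
    ∀ N : ℕ, 0 < N → ∀ (n : ℕ) (d : Fin n → ℕ), (∀ i, 0 < d i) → (∏ i, d i) = N →
      ∀ (m : Fin n → ℕ) (q : ℕ), 1 ≤ q → ∑ i, m i * d i = q * N →
        ∃ k : Fin n → ℕ, (∀ i, k i ≤ m i) ∧ ∑ i, k i * d i = N := by
  intro N
  induction N using Nat.strong_induction_on with
  | _ N IH =>
  intro hN n d hd hprod m q hq hsum
  rcases eq_or_lt_of_le hq with hq1 | hq2
  · exact ⟨m, fun i => le_rfl, by rw [hsum, ← hq1, one_mul]⟩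
  -- now q ≥ 2
  by_cases hN1 : N = 1
  · subst hN1
    have hd1 : ∀ i, d i = 1 := fun i =>
      Nat.dvd_one.mp (hprod ▸ Finset.dvd_prod_of_mem d (Finset.mem_univ i))
    have hpos : ∃ i, 0 < m i := by
      by_contra hcon
      push_neg at hcon
      have hz : ∀ i ∈ Finset.univ, m i * d i = 0 := by
        intro i _
        have h0 : m i = 0 := by have := hcon i; omega
        rw [h0, Nat.zero_mul]
      rw [Finset.sum_eq_zero hz] at hsum
      omega
    obtain ⟨i0, hi0⟩ := hpos
    refine ⟨fun j => if j = i0 then 1 else 0, ?_, ?_⟩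
    · intro i
      by_cases hi : i = i0
      · subst hi; simp only [if_pos rfl]; exact hi0
      · simp [hi]
    · rw [Finset.sum_eq_single i0]
      · simp [hd1 i0]
      · intro b _ hb; simp [hb]
      · intro hb; exact absurd (Finset.mem_univ i0) hb
  -- N ≥ 2 : pick a prime p dividing N
  have hN2 : 2 ≤ N := by omega
  set p := N.minFac with hp
  have pp : p.Prime := Nat.minFac_prime hN1
  have hpN : p ∣ N := Nat.minFac_dvd N
  obtain ⟨i₀, -, hpi₀⟩ := pp.prime.exists_mem_finset_dvd (hprod ▸ hpN)
  set N' := N / p with hN'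
  have hNpN' : N = p * N' := (Nat.mul_div_cancel' hpN).symm
  have hN'pos : 0 < N' := Nat.div_pos (Nat.minFac_le hN) pp.pos
  have hN'lt : N' < N := Nat.div_lt_self hN pp.one_lt
  have hdi₀ : d i₀ = p * (d i₀ / p) := (Nat.mul_div_cancel' hpi₀).symm
  have hd'i₀pos : 0 < d i₀ / p := Nat.div_pos (Nat.le_of_dvd (hd i₀) hpi₀) pp.pos
  set d' := Function.update d i₀ (d i₀ / p) with hd'def
  have hd' : ∀ i, 0 < d' i := by
    intro i
    by_cases hi : i = i₀
    · subst hi; simpa [d'] using hd'i₀pos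
    · simpa [d', Function.update_of_ne hi] using hd i
  have hprod' : ∏ i, d' i = N' := by
    have h1 : p * ∏ i, d' i = p * N' := by
      rw [← hNpN', ← hprod]
      rw [hd'def, Finset.prod_update_of_mem (Finset.mem_univ i₀)]
      rw [Finset.sdiff_singleton_eq_erase]
      rw [← Finset.mul_prod_erase Finset.univ d (Finset.mem_univ i₀)]
      rw [← mul_assoc, ← hdi₀]
    exact Nat.eq_of_mul_eq_mul_left pp.pos h1
  set m' := Function.update m i₀ (p * m i₀) with hm'def
  have hsum' : ∑ i, m' i * d' i = (q * p) * N' := by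
    have heq : ∑ i, m' i * d' i = ∑ i, m i * d i := by
      apply Finset.sum_congr rfl
      intro i _
      by_cases hi : i = i₀
      · subst hi
        simp only [m', d', Function.update_self]
        calc p * m i * (d i / p) = m i * (p * (d i / p)) := by ring
        _ = m i * d i := by rw [← hdi₀]
      · simp [m', d', Function.update_of_ne hi]
    rw [heq, hsum, hNpN']; ring
  obtain ⟨parts, hparts_sum, hparts_deg⟩ :=
    veronese_aux_partition d' hd' N'
      (fun mm qq hqq hss => IH N' hN'lt hN'pos n d' hd' hprod' mm qq hqq hss)
      (q * p) m' hsum'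
  have hcard : 2 * p - 1 ≤ (Finset.univ : Finset (Fin (q * p))).card := by
    rw [Finset.card_univ, Fintype.card_fin]
    have h2p : 2 * p ≤ q * p := Nat.mul_le_mul_right p (by omega)
    omega
  obtain ⟨J, -, hJcard, hJdvd⟩ :=
    Int.erdos_ginzburg_ziv (n := p) (fun j => (parts j i₀ : ℤ)) hcard
  set U : Fin n → ℕ := fun i => ∑ j ∈ J, parts j i with hU
  have hUle : ∀ i, U i ≤ m' i := by
    intro i
    rw [← hparts_sum i]
    exact Finset.sum_le_sum_of_subset (Finset.subset_univ J)
  have hUsum : ∑ i, U i * d' i = p * N' := by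
    calc ∑ i, (∑ j ∈ J, parts j i) * d' i
        = ∑ i, ∑ j ∈ J, parts j i * d' i := by
          apply Finset.sum_congr rfl; intro i _; exact Finset.sum_mul ..
      _ = ∑ j ∈ J, ∑ i, parts j i * d' i := Finset.sum_comm
      _ = ∑ j ∈ J, N' := Finset.sum_congr rfl (fun j _ => hparts_deg j)
      _ = p * N' := by rw [Finset.sum_const, hJcard, smul_eq_mul]
  have hpU : p ∣ U i₀ := by
    have hcast : ((U i₀ : ℕ) : ℤ) = ∑ j ∈ J, (parts j i₀ : ℤ) := by
      rw [hU]; push_cast; ring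
    have : (p : ℤ) ∣ ((U i₀ : ℕ) : ℤ) := hcast ▸ hJdvd
    exact_mod_cast this
  refine ⟨Function.update U i₀ (U i₀ / p), ?_, ?_⟩
  · intro i
    by_cases hi : i = i₀
    · subst hi
      rw [Function.update_self]
      have h1 : U i ≤ p * m i := by simpa [m'] using hUle i
      have := Nat.div_le_div_right (c := p) h1
      rwa [Nat.mul_div_cancel_left _ pp.pos] at this
    · rw [Function.update_of_ne hi]
      simpa [m', Function.update_of_ne hi] using hUle i
  · have heq : ∑ i, Function.update U i₀ (U i₀ / p) i * d i = ∑ i, U i * d' i := by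
      apply Finset.sum_congr rfl
      intro i _
      by_cases hi : i = i₀
      · subst hi
        rw [Function.update_self]
        simp only [d', Function.update_self]
        calc U i / p * d i = U i / p * (p * (d i / p)) := by rw [← hdi₀]
          _ = (U i / p * p) * (d i / p) := by ring
          _ = U i * (d i / p) := by rw [Nat.div_mul_cancel hpU]
      · rw [Function.update_of_ne hi]
        simp [d', Function.update_of_ne hi]
    rw [heq, hUsum, ← hNpN']

/-- Item-level version of the key lemma, for degrees `e j` each equal to some `d i`. -/
lemma veronese_aux_keyE {n s : ℕ} (d : Fin n → ℕ) (e : Fin s → ℕ)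
    (hd : ∀ i, 0 < d i) (hdeg : ∀ j, ∃ i, e j = d i) (N : ℕ) (hN : N = ∏ i, d i)
    (k : Fin s → ℕ) (q : ℕ) (hq : 1 ≤ q) (hsum : ∑ j, k j * e j = q * N) :
    ∃ k' : Fin s → ℕ, (∀ j, k' j ≤ k j) ∧ ∑ j, k' j * e j = N := by
  classical
  choose ι hι using hdeg
  have hNpos : 0 < N := hN ▸ Finset.prod_pos (fun i _ => hd i)
  set m : Fin n → ℕ := fun i => ∑ j ∈ Finset.univ.filter (fun j => ι j = i), k j with hm
  have hmsum : ∑ i, m i * d i = ∑ j, k j * e j := by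
    calc ∑ i, (∑ j ∈ Finset.univ.filter (fun j => ι j = i), k j) * d i
        = ∑ i, ∑ j ∈ Finset.univ.filter (fun j => ι j = i), k j * d i := by
          apply Finset.sum_congr rfl; intro i _; exact Finset.sum_mul ..
      _ = ∑ i, ∑ j ∈ Finset.univ.filter (fun j => ι j = i), k j * e j := by
          apply Finset.sum_congr rfl
          intro i _
          apply Finset.sum_congr rfl
          intro j hj
          have : ι j = i := (Finset.mem_filter.mp hj).2
          rw [hι j, this]
      _ = ∑ j, k j * e j := Finset.sum_fiberwise _ _ _
  obtain ⟨kb, hkb_le, hkb_sum⟩ :=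
    veronese_aux_key N hNpos n d hd hN.symm m q hq (by rw [hmsum, hsum])
  have hdist : ∀ i : Fin n, ∃ K : Fin s → ℕ, (∀ j, K j ≤ k j) ∧
      ∑ j ∈ Finset.univ.filter (fun j => ι j = i), K j = kb i := by
    intro i
    exact veronese_aux_distr _ k (kb i) (hkb_le i)
  choose K hK1 hK2 using hdist
  refine ⟨fun j => K (ι j) j, fun j => hK1 (ι j) j, ?_⟩
  calc ∑ j, K (ι j) j * e j
      = ∑ i, ∑ j ∈ Finset.univ.filter (fun j => ι j = i), K (ι j) j * e j :=
        (Finset.sum_fiberwise _ _ _).symm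
    _ = ∑ i, (∑ j ∈ Finset.univ.filter (fun j => ι j = i), K i j) * d i := by
        apply Finset.sum_congr rfl
        intro i _
        rw [Finset.sum_mul]
        apply Finset.sum_congr rfl
        intro j hj
        have hji : ι j = i := (Finset.mem_filter.mp hj).2
        rw [hι j, hji]
    _ = ∑ i, kb i * d i := by
        apply Finset.sum_congr rfl; intro i _; rw [hK2 i]
    _ = N := hkb_sum

/-- Let `A = ⊕ A_d` be a graded `ℂ`-algebra generated by homogeneous elements
`h₁,…,h_s` of degrees `e₁,…,e_s`, each `e_j` lying in the list `d₁,…,dₙ` of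
positive integers with `∏ dᵢ = N`.  Then the Veronese-type subring
`R = ⊕_{q≥0} A_{qN}` is generated as an algebra by `A_N`. -/
theorem veronese_generated_in_degree_one
    (A : Type*) [CommRing A] [Algebra ℂ A]
    (𝒜 : ℕ → Submodule ℂ A) [GradedAlgebra 𝒜]
    (s n : ℕ) (h : Fin s → A) (e : Fin s → ℕ) (d : Fin n → ℕ)
    (hd : ∀ i, 0 < d i)
    (hmem : ∀ j, h j ∈ 𝒜 (e j))
    (hdeg : ∀ j, ∃ i, e j = d i)
    (hgen : Algebra.adjoin ℂ (Set.range h) = ⊤)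
    (N : ℕ) (hN : N = ∏ i, d i) :
    ∀ q : ℕ, ∀ x ∈ 𝒜 (q * N), x ∈ Algebra.adjoin ℂ (𝒜 N : Set A) := by
  classical
  have he_pos : ∀ j, 0 < e j := fun j => by
    obtain ⟨i, hi⟩ := hdeg j; rw [hi]; exact hd i
  -- monomials are homogeneous
  have hmono : ∀ k : Fin s → ℕ, (∏ j, h j ^ k j) ∈ 𝒜 (∑ j, k j * e j) := by
    intro k
    have : ∀ F : Finset (Fin s), (∏ j ∈ F, h j ^ k j) ∈ 𝒜 (∑ j ∈ F, k j * e j) := by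
      intro F
      induction F using Finset.induction_on with
      | empty => simpa using SetLike.one_mem_graded 𝒜
      | insert _ _ ha ih =>
        rename_i a F
        rw [Finset.prod_insert ha, Finset.sum_insert ha]
        have hpow : h a ^ k a ∈ 𝒜 (k a * e a) := by
          have := SetLike.pow_mem_graded (k a) (hmem a)
          simpa [smul_eq_mul] using this
        exact SetLike.mul_mem_graded hpow ih
    exact this Finset.univ
  intro q
  induction q using Nat.strong_induction_on with
  | _ q IH =>
  intro x hx
  -- x lies in the span of the monoid closure of the generators
  have hxspan : x ∈ Submodule.span ℂ ((Submonoid.closure (Set.range h) : Submonoid A) : Set A) := by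
    have hx1 : x ∈ Algebra.adjoin ℂ (Set.range h) := by rw [hgen]; trivial
    rw [← Subalgebra.mem_toSubmodule, Algebra.adjoin_eq_span] at hx1
    exact hx1
  -- the degree-(q*N) projection
  have hclaim : ∀ y ∈ Submodule.span ℂ ((Submonoid.closure (Set.range h) : Submonoid A) : Set A),
      ((DirectSum.decompose 𝒜 y (q * N) : 𝒜 (q * N)) : A) ∈ Algebra.adjoin ℂ (𝒜 N : Set A) := by
    intro y hy
    induction hy using Submodule.span_induction with
    | mem y hy =>
      have hrep : ∃ k : Fin s → ℕ, y = ∏ j, h j ^ k j := by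
        induction hy using Submonoid.closure_induction with
        | mem z hz =>
          obtain ⟨j₀, rfl⟩ := hz
          refine ⟨fun j => if j = j₀ then 1 else 0, ?_⟩
          rw [Finset.prod_eq_single j₀]
          · simp
          · intro b _ hb; simp [hb]
          · intro hb; exact absurd (Finset.mem_univ j₀) hb
        | one => exact ⟨fun _ => 0, by simp⟩
        | mul a b _ _ iha ihb =>
          obtain ⟨ka, rfl⟩ := iha
          obtain ⟨kb, rfl⟩ := ihb
          refine ⟨ka + kb, ?_⟩
          rw [← Finset.prod_mul_distrib]
          apply Finset.prod_congr rfl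
          intro j _
          rw [Pi.add_apply, pow_add]
      obtain ⟨k, rfl⟩ := hrep
      have hydeg := hmono k
      by_cases hdq : ∑ j, k j * e j = q * N
      · rw [DirectSum.decompose_of_mem_same 𝒜 (hdq ▸ hydeg)]
        rcases Nat.eq_zero_or_pos q with hq0 | hqpos
        · -- degree 0 : the monomial is 1
          have hk0 : ∀ j, k j = 0 := by
            intro j
            subst hq0
            simp only [Nat.zero_mul] at hdq
            by_contra hkj
            have h1 : k j * e j ≤ ∑ j, k j * e j :=
              Finset.single_le_sum (f := fun j => k j * e j) (fun _ _ => Nat.zero_le _)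
                (Finset.mem_univ j)
            have h2 := he_pos j
            have : 0 < k j * e j := Nat.mul_pos (Nat.pos_of_ne_zero hkj) h2
            omega
          have : (∏ j, h j ^ k j) = 1 := Finset.prod_eq_one (fun j _ => by rw [hk0 j, pow_zero])
          rw [this]
          exact one_mem _
        · obtain ⟨k', hk'le, hk'sum⟩ :=
            veronese_aux_keyE d e hd hdeg N hN k q hqpos hdq
          have hsplit : (∏ j, h j ^ k j) = (∏ j, h j ^ k' j) * ∏ j, h j ^ (k j - k' j) := by
            rw [← Finset.prod_mul_distrib]
            apply Finset.prod_congr rfl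
            intro j _
            rw [← pow_add]
            congr 1
            have := hk'le j
            omega
          rw [hsplit]
          apply mul_mem
          · exact Algebra.subset_adjoin (hk'sum ▸ hmono k')
          · have hdeg2 : ∑ j, (k j - k' j) * e j = (q - 1) * N := by
              have h1 : ∑ j, (k' j * e j + (k j - k' j) * e j) = ∑ j, k j * e j := by
                apply Finset.sum_congr rfl
                intro j _
                have := hk'le j
                have hadd : k' j + (k j - k' j) = k j := by omega
                rw [← add_mul, hadd]
              rw [Finset.sum_add_distrib, hk'sum] at h1
              have h2 : q * N = (q - 1) * N + N := by
                have h3 : q - 1 + 1 = q := by omega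
                calc q * N = (q - 1 + 1) * N := by rw [h3]
                  _ = (q - 1) * N + N := by ring
              omega
            exact IH (q - 1) (by omega) _ (hdeg2 ▸ hmono (fun j => k j - k' j))
      · rw [DirectSum.decompose_of_mem_ne 𝒜 hydeg hdq]
        exact zero_mem _
    | zero => simpa using zero_mem _
    | add a b _ _ iha ihb =>
      rw [DirectSum.decompose_add, DirectSum.add_apply, Submodule.coe_add]
      exact add_mem iha ihb
    | smul c a _ iha =>
      rw [DirectSum.decompose_smul, DirectSum.smul_apply, Submodule.coe_smul]
      exact Subalgebra.smul_mem _ iha c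
  have hx' := hclaim x hxspan
  rwa [DirectSum.decompose_of_mem_same 𝒜 hx] at hx'
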